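/- Let V be a finite type with decidable equality and A : Matrix V V (ZMod 2) symmetric. For a finset W ⊆ V say W is reducible in A if there exists a matrix M (indexed by ↥W × ↥Wᶜ over ZMod 2) such that for all i ∈ W and j ∉ W, A i j = ∑_{k ∈ W} A i k * M k j. Then a finset W is nonempty, reducible, and has no nonempty proper subset that is reducible (i.e., W is minimally reducible) if and only if exactly one of the following holds: (1) W = {v} for some v with A v v = 1 (a positive vertex, the domain of the positive rule); (2) W = {v} for some v with A v v = 0 and A v u = 0 for all u (an isolated negative vertex, the domain of the negative rule); or (3) W = {v, w} for distinct v, w with A v v = 0, A w w = 0, and A v w = 1 (an adjacent pair of negative vertices, the domain of the double rule). -/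
import Mathlib


open Matrix

/-- A finset `W` of vertices is reducible in `A` if the off-diagonal block of `A` from `W`
to its complement lies in the column space of the principal submatrix of `A` on `W`. -/
def IsReducibleSet {V : Type*} [Fintype V] [DecidableEq V]
    (A : Matrix V V (ZMod 2)) (W : Finset V) : Prop :=
  ∃ M : Matrix ↥W ↥Wᶜ (ZMod 2), ∀ (i : ↥W) (j : ↥Wᶜ),
    A (i : V) (j : V) = ∑ k : ↥W, A (i : V) (k : V) * M k j

lemma zmod2_cases (x : ZMod 2) : x = 0 ∨ x = 1 := by revert x; decide

section aux

variable {V : Type*} [Fintype V] [DecidableEq V] (A : Matrix V V (ZMod 2))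

lemma red_singleton (v : V) :
    IsReducibleSet A {v} ↔ (A v v = 1 ∨ ∀ u, u ≠ v → A v u = 0) := by
  haveI : Unique ↥({v} : Finset V) :=
    ⟨⟨⟨v, Finset.mem_singleton_self v⟩⟩, fun a => Subtype.ext (Finset.mem_singleton.1 a.2)⟩
  constructor
  · rintro ⟨M, h⟩
    rcases zmod2_cases (A v v) with h0 | h1
    · right
      intro u hu
      have hj : u ∈ ({v} : Finset V)ᶜ := by simp [hu]
      have := h ⟨v, Finset.mem_singleton_self v⟩ ⟨u, hj⟩
      rw [Fintype.sum_unique] at this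
      have hd : ((default : ↥({v} : Finset V)) : V) = v := Finset.mem_singleton.1 (default : ↥({v} : Finset V)).2
      rw [hd, h0, zero_mul] at this
      exact this
    · left; exact h1
  · rintro (h1 | h0)
    · refine ⟨fun _ j => A v ↑j, fun i j => ?_⟩
      rw [Fintype.sum_unique]
      have hi : (i : V) = v := Finset.mem_singleton.1 i.2
      have hd : ((default : ↥({v} : Finset V)) : V) = v := Finset.mem_singleton.1 (default : ↥({v} : Finset V)).2
      rw [hi, hd, h1, one_mul]
    · refine ⟨0, fun i j => ?_⟩
      have hi : (i : V) = v := Finset.mem_singleton.1 i.2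
      have hj : (j : V) ≠ v := fun h =>
        (Finset.mem_compl.1 j.2) (Finset.mem_singleton.2 h)
      simp [hi, h0 _ hj]

lemma red_pair (hA : Aᵀ = A) (v w : V) (hvw : v ≠ w)
    (hv : A v v = 0) (hw : A w w = 0) (he : A v w = 1) :
    IsReducibleSet A {v, w} := by
  have hwv : A w v = 1 := by
    have := congrFun (congrFun hA v) w
    rw [Matrix.transpose_apply] at this
    rw [this, he]
  refine ⟨fun k j => if (k : V) = v then A w ↑j else A v ↑j, fun i j => ?_⟩
  have hsum : ∑ k : ↥({v, w} : Finset V),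
      A (i : V) (k : V) * (if (k : V) = v then A w ↑j else A v ↑j)
      = ∑ u ∈ ({v, w} : Finset V), A (i : V) u * (if u = v then A w ↑j else A v ↑j) :=
    Finset.sum_coe_sort ({v, w} : Finset V)
      (fun u => A (i : V) u * (if u = v then A w ↑j else A v ↑j))
  rw [hsum, Finset.sum_insert (by simp [hvw]), Finset.sum_singleton]
  have hi := i.2
  simp only [Finset.mem_insert, Finset.mem_singleton] at hi
  rcases hi with hi | hi <;> rw [hi] <;>
    simp [hvw, Ne.symm hvw, hv, hw, he, hwv]

lemma red_zero_row (W : Finset V) (hred : IsReducibleSet A W) (i : V) (hi : i ∈ W)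
    (hz : ∀ k ∈ W, A i k = 0) (j : V) (hj : j ∉ W) : A i j = 0 := by
  obtain ⟨M, h⟩ := hred
  have := h ⟨i, hi⟩ ⟨j, Finset.mem_compl.2 hj⟩
  rw [this]
  exact Finset.sum_eq_zero fun k _ => by rw [hz _ k.2, zero_mul]

end aux

/-- the minimally reducible vertex sets are exactly the domains of the three
combinatorial reduction rules: a positive (looped) vertex, an isolated negative vertex,
or an adjacent pair of negative vertices. -/
theorem stmt_10 {V : Type*} [Fintype V] [DecidableEq V]
    (A : Matrix V V (ZMod 2)) (hA : Aᵀ = A) (W : Finset V) :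
    (W.Nonempty ∧ IsReducibleSet A W ∧
        ∀ S : Finset V, S ⊂ W → S.Nonempty → ¬ IsReducibleSet A S) ↔
      ((∃ v : V, W = {v} ∧ A v v = 1) ∨
        (∃ v : V, W = {v} ∧ A v v = 0 ∧ ∀ u : V, A v u = 0) ∨
        (∃ v w : V, v ≠ w ∧ W = {v, w} ∧ A v v = 0 ∧ A w w = 0 ∧ A v w = 1)) := by
  constructor
  · rintro ⟨hne, hred, hmin⟩
    obtain ⟨v, hv⟩ := hne
    by_cases hW : W = {v}
    · subst hW
      rcases (red_singleton A v).1 hred with h1 | h0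
      · exact Or.inl ⟨v, rfl, h1⟩
      · rcases zmod2_cases (A v v) with hd | hd
        · refine Or.inr (Or.inl ⟨v, rfl, hd, fun u => ?_⟩)
          by_cases hu : u = v
          · subst hu; exact hd
          · exact h0 u hu
        · exact Or.inl ⟨v, rfl, hd⟩
    · obtain ⟨w, hwW, hwv⟩ : ∃ w ∈ W, w ≠ v := by
        by_contra h
        push_neg at h
        exact hW (Finset.eq_singleton_iff_unique_mem.2 ⟨hv, fun x hx => h x hx⟩)
      have hssub : ∀ u ∈ W, ({u} : Finset V) ⊂ W := by
        intro u hu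
        refine Finset.ssubset_iff_subset_ne.2 ⟨Finset.singleton_subset_iff.2 hu, ?_⟩
        intro h
        have hv' : v ∈ ({u} : Finset V) := h ▸ hv
        have hw' : w ∈ ({u} : Finset V) := h ▸ hwW
        simp only [Finset.mem_singleton] at hv' hw'
        exact hwv (hw'.trans hv'.symm)
      have hdiag : ∀ u ∈ W, A u u = 0 := by
        intro u hu
        rcases zmod2_cases (A u u) with h0 | h1
        · exact h0
        · exact absurd ((red_singleton A u).2 (Or.inl h1))
            (hmin {u} (hssub u hu) ⟨u, Finset.mem_singleton_self u⟩)
      by_cases hedge : ∃ a ∈ W, ∃ b ∈ W, a ≠ b ∧ A a b = 1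
      · obtain ⟨a, ha, b, hb, hab, hab1⟩ := hedge
        have hredab := red_pair A hA a b hab (hdiag a ha) (hdiag b hb) hab1
        have hsub : ({a, b} : Finset V) ⊆ W :=
          Finset.insert_subset ha (Finset.singleton_subset_iff.2 hb)
        have hWeq : W = {a, b} := by
          by_contra hne'
          exact hmin {a, b}
            (Finset.ssubset_iff_subset_ne.2 ⟨hsub, fun h => hne' h.symm⟩)
            ⟨a, by simp⟩ hredab
        exact Or.inr (Or.inr ⟨a, b, hab, hWeq, hdiag a ha, hdiag b hb, hab1⟩)
      · push_neg at hedge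
        have hz : ∀ k ∈ W, A v k = 0 := by
          intro k hk
          by_cases hkv : k = v
          · subst hkv; exact hdiag _ hk
          · rcases zmod2_cases (A v k) with h0 | h1
            · exact h0
            · exact absurd h1 (hedge v hv k hk (Ne.symm hkv))
        have hiso : ∀ u, A v u = 0 := by
          intro u
          by_cases hu : u ∈ W
          · exact hz u hu
          · exact red_zero_row A W hred v hv hz u hu
        exact absurd ((red_singleton A v).2 (Or.inr fun u _ => hiso u))
          (hmin {v} (hssub v hv) ⟨v, Finset.mem_singleton_self v⟩)
  · rintro (⟨v, rfl, h1⟩ | ⟨v, rfl, h0, hiso⟩ | ⟨v, w, hvw, rfl, hv', hw', he⟩)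
    · refine ⟨⟨v, Finset.mem_singleton_self v⟩,
        (red_singleton A v).2 (Or.inl h1), fun S hS hSne _ => ?_⟩
      rcases Finset.ssubset_singleton_iff.1 hS with rfl
      exact hSne.ne_empty rfl
    · refine ⟨⟨v, Finset.mem_singleton_self v⟩,
        (red_singleton A v).2 (Or.inr fun u _ => hiso u), fun S hS hSne _ => ?_⟩
      rcases Finset.ssubset_singleton_iff.1 hS with rfl
      exact hSne.ne_empty rfl
    · have hwv : A w v = 1 := by
        have := congrFun (congrFun hA v) w
        rw [Matrix.transpose_apply] at this
        rw [this, he]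
      refine ⟨⟨v, by simp⟩, red_pair A hA v w hvw hv' hw' he, fun S hS hSne hSred => ?_⟩
      have hcard : S.card < 2 := by
        have := Finset.card_lt_card hS
        rwa [Finset.card_pair hvw] at this
      have hcard1 : S.card = 1 := le_antisymm (by omega) (Finset.one_le_card.2 hSne)
      obtain ⟨a, rfl⟩ := Finset.card_eq_one.1 hcard1
      have haW : a ∈ ({v, w} : Finset V) := hS.1 (Finset.mem_singleton_self a)
      simp only [Finset.mem_insert, Finset.mem_singleton] at haW
      rcases (red_singleton A a).1 hSred with h1' | h0'
      · rcases haW with rfl | rfl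
        · rw [hv'] at h1'; exact absurd h1' (by decide)
        · rw [hw'] at h1'; exact absurd h1' (by decide)
      · rcases haW with rfl | rfl
        · have := h0' w (Ne.symm hvw)
          rw [he] at this; exact absurd this (by decide)
        · have := h0' v hvw
          rw [hwv] at this; exact absurd this (by decide)
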